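/- Let ψ : ℝ → ℝ be analytic on a neighbourhood of 0 with ψ(0) = 0 and ψ'(0) ≠ 0. Then there exists a function φ analytic on a neighbourhood of 0 such that φ(0) = 0, φ'(0) = 1, and φ'(x)·ψ(x) = φ(x)·ψ'(0) for all x in that neighbourhood. (In particular, y = φ(x) transforms the ODE x' = ψ(x) into y' = ψ'(0)y.) -/

import Mathlib

open Filter

open FormalMultilinearSeries in

lemma exists_analytic_antideriv {h : ℝ → ℝ} (hh : AnalyticAt ℝ h 0) :
    ∃ H : ℝ → ℝ, AnalyticAt ℝ H 0 ∧ H 0 = 0 ∧ ∀ᶠ x in nhds (0 : ℝ), HasDerivAt H (h x) x := by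
  obtain ⟨p, hp⟩ := hh
  set a : ℕ → ℝ := p.coeff with ha
  -- pick t with 0 < t < radius
  obtain ⟨t, ht0, htr⟩ := ENNReal.lt_iff_exists_nnreal_btwn.mp hp.radius_pos
  have hsum : Summable fun n => ‖p n‖ * (t : ℝ) ^ n := p.summable_norm_mul_pow htr
  have hant : Summable fun n => ‖a n‖ * (t : ℝ) ^ n := by
    simpa [ha, norm_apply_eq_norm_coef] using hsum
  have ht0' : (0 : ℝ) < t := by exact_mod_cast ht0
  -- eventual HasSum representation of h
  have hder := hasFPowerSeriesAt_iff.mp hp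
  rw [Metric.eventually_nhds_iff] at hder
  obtain ⟨ε, hε, hball⟩ := hder
  set s : ℝ := min (t : ℝ) ε with hs
  have hs0 : 0 < s := lt_min ht0' hε
  -- coefficients of the antiderivative
  set b : ℕ → ℝ := fun n => if n = 0 then 0 else a (n - 1) / n with hb
  set g : ℕ → ℝ → ℝ := fun n z => b n * z ^ n with hg
  set g' : ℕ → ℝ → ℝ := fun n z => b n * (n * z ^ (n - 1)) with hg'
  have hgd : ∀ n z, HasDerivAt (g n) (g' n z) z := by
    intro n z
    simpa [hg, hg'] using (hasDerivAt_pow n z).const_mul (b n)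
  have hg'succ : ∀ n (z : ℝ), g' (n + 1) z = a n * z ^ n := by
    intro n z
    have : ((n : ℝ) + 1) ≠ 0 := by positivity
    simp only [hg', hb, Nat.succ_ne_zero, if_false, Nat.add_sub_cancel, Nat.cast_add, Nat.cast_one]
    rw [← mul_assoc, div_mul_cancel₀ _ this]
  set u : ℕ → ℝ := fun n => if n = 0 then 0 else ‖a (n - 1)‖ * (t : ℝ) ^ (n - 1) with hu
  have hu_sum : Summable u := by
    rw [← summable_nat_add_iff 1]
    simpa [hu] using hant
  have hbound : ∀ n, ∀ y ∈ Metric.ball (0 : ℝ) s, ‖g' n y‖ ≤ u n := by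
    rintro (_ | n) y hy
    · simp [hg', hb, hu]
    · rw [hg'succ, hu]
      simp only [Nat.succ_ne_zero, if_false, Nat.add_sub_cancel]
      rw [norm_mul, norm_pow]
      gcongr
      have := Metric.mem_ball.mp hy
      rw [dist_zero_right] at this
      exact le_of_lt (lt_of_lt_of_le this (by rw [hs]; exact min_le_left _ _))
  have hg_zero : ∀ n, g n 0 = 0 := by
    rintro (_ | n) <;> simp [hg, hb]
  set H : ℝ → ℝ := fun z => ∑' n, g n z with hH
  have hH0 : H 0 = 0 := by simp [hH, hg_zero]
  -- summability of g at points in the ball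
  have hgsummable : ∀ y ∈ Metric.ball (0 : ℝ) s, Summable fun n => g n y := by
    intro y hy
    have hyt : |y| ≤ (t : ℝ) := by
      have := Metric.mem_ball.mp hy
      rw [dist_zero_right, Real.norm_eq_abs] at this
      exact le_of_lt (lt_of_lt_of_le this (min_le_left _ _))
    rw [← summable_nat_add_iff 1]
    apply Summable.of_norm_bounded (g := fun n => (‖a n‖ * (t:ℝ) ^ n) * (t:ℝ))
      (hant.mul_right _)
    intro n
    have h1 : ‖g (n + 1) y‖ = ‖b (n+1)‖ * |y| ^ (n+1) := by
      simp [hg, abs_mul, abs_pow, Real.norm_eq_abs]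
    rw [h1]
    have h2 : ‖b (n+1)‖ ≤ ‖a n‖ := by
      simp only [hb, Nat.succ_ne_zero, if_false, Nat.add_sub_cancel]
      rw [norm_div]
      apply div_le_self (norm_nonneg _)
      rw [Real.norm_eq_abs, Nat.abs_cast]
      exact_mod_cast Nat.one_le_iff_ne_zero.mpr (Nat.succ_ne_zero n)
    calc ‖b (n+1)‖ * |y| ^ (n+1) ≤ ‖a n‖ * (t:ℝ)^(n+1) := by
          gcongr
      _ = ‖a n‖ * (t:ℝ)^n * (t:ℝ) := by ring
  -- H is analytic at 0
  have hHanalytic : AnalyticAt ℝ H 0 := by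
    refine ⟨ofScalars ℝ b, hasFPowerSeriesAt_iff.mpr ?_⟩
    filter_upwards [Metric.ball_mem_nhds (0:ℝ) hs0] with z hz
    have hcoeff : ∀ n, (ofScalars ℝ b).coeff n = b n := by
      intro n
      simp [coeff, ofScalars, Pi.one_def, List.ofFn_const]
    have hfun : (fun n => z ^ n • (ofScalars ℝ b).coeff n) = fun n => g n z := by
      funext n; rw [hcoeff]; simp [hg, smul_eq_mul, mul_comm]
    rw [zero_add, hfun]
    exact (hgsummable z hz).hasSum
  -- derivative
  have hderiv : ∀ᶠ x in nhds (0:ℝ), HasDerivAt H (h x) x := by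
    filter_upwards [Metric.ball_mem_nhds (0:ℝ) hs0] with y hy
    have key := hasDerivAt_tsum_of_isPreconnected hu_sum Metric.isOpen_ball
      (convex_ball (0:ℝ) s).isPreconnected (fun n y _ => hgd n y) hbound
      (Metric.mem_ball_self hs0)
      (by simpa [hg_zero] using summable_zero) hy
    have hy' : dist y 0 < ε := lt_of_lt_of_le (Metric.mem_ball.mp hy) (min_le_right _ _)
    have hsum_y : HasSum (fun n => g' n y) (h y) := by
      apply (hasSum_nat_add_iff' 1).mp
      have h0 : g' 0 y = 0 := by simp [hg']
      have := hball hy'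
      rw [zero_add] at this
      simp only [Finset.range_one, Finset.sum_singleton, h0, sub_zero]
      have heq : (fun n => g' (n + 1) y) = fun n => y ^ n • a n := by
        funext n; rw [hg'succ]; simp [smul_eq_mul, mul_comm]
      rw [heq]
      exact this
    rw [hsum_y.tsum_eq] at key
    exact key
  exact ⟨H, hHanalytic, hH0, hderiv⟩

theorem analytic_linearization (ψ : ℝ → ℝ)
    (hψ : AnalyticAt ℝ ψ 0) (hψ0 : ψ 0 = 0) (hψ'0 : deriv ψ 0 ≠ 0) :
    ∃ φ : ℝ → ℝ, AnalyticAt ℝ φ 0 ∧ φ 0 = 0 ∧ deriv φ 0 = 1 ∧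
      ∀ᶠ x in nhds (0 : ℝ), deriv φ x * ψ x = φ x * deriv ψ 0 := by
  obtain ⟨p, hp⟩ := hψ
  set lam := deriv ψ 0 with hlam
  set u : ℝ → ℝ := dslope ψ 0 with hudef
  have hu : AnalyticAt ℝ u 0 := ⟨p.fslope, hp.has_fpower_series_dslope_fslope⟩
  have hu0 : u 0 = lam := dslope_same ψ 0
  have hxu : ∀ x, x * u x = ψ x := by
    intro x
    have := sub_smul_dslope ψ 0 x
    simpa [hψ0, smul_eq_mul] using this
  set w : ℝ → ℝ := fun x => lam - u x with hwdef
  have hw : AnalyticAt ℝ w 0 := analyticAt_const.sub hu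
  obtain ⟨q, hq⟩ := hw
  set v : ℝ → ℝ := dslope w 0 with hvdef
  have hv : AnalyticAt ℝ v 0 := ⟨q.fslope, hq.has_fpower_series_dslope_fslope⟩
  have hxv : ∀ x, x * v x = lam - u x := by
    intro x
    have := sub_smul_dslope w 0 x
    simpa [hwdef, hu0, smul_eq_mul] using this
  set h : ℝ → ℝ := fun x => v x / u x with hhdef
  have hu0ne : u 0 ≠ 0 := by rw [hu0]; exact hψ'0
  have hh : AnalyticAt ℝ h 0 := hv.div hu hu0ne
  obtain ⟨H, hHa, hH0, hHd⟩ := exists_analytic_antideriv hh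
  set φ : ℝ → ℝ := fun x => x * Real.exp (H x) with hφdef
  have hφa : AnalyticAt ℝ φ 0 := by
    exact (analyticAt_id).mul hHa.rexp
  have hune : ∀ᶠ x in nhds (0:ℝ), u x ≠ 0 := hu.continuousAt.eventually_ne hu0ne
  have hphi : ∀ᶠ x in nhds (0:ℝ),
      HasDerivAt φ (Real.exp (H x) * (1 + x * h x)) x := by
    filter_upwards [hHd] with x hx
    have : HasDerivAt (fun y => y * Real.exp (H y)) (1 * Real.exp (H x) + x * (Real.exp (H x) * h x)) x :=
      (hasDerivAt_id' x).mul hx.exp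
    convert this using 1
    ring
  have hd0 : deriv φ 0 = 1 := by
    have := (hphi.self_of_nhds).deriv
    rw [this, hH0]
    simp
  refine ⟨φ, hφa, by simp [hφdef], hd0, ?_⟩
  filter_upwards [hphi, hune] with x hx hun
  rw [hx.deriv, ← hxu x]
  have key : (1 + x * h x) * u x = lam := by
    have h1 : x * h x * u x = x * v x := by
      simp only [hhdef]
      rw [mul_assoc, div_mul_cancel₀ _ hun]
    calc (1 + x * h x) * u x = u x + x * h x * u x := by ring
      _ = u x + (lam - u x) := by rw [h1, hxv x]
      _ = lam := by ring
  linear_combination (Real.exp (H x) * x) * key
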